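/- Expected maximum of chi-squared variables: let V_1,…,V_J (J ≥ 2) be i.i.d. chi-squared random variables with d ≥ 1 degrees of freedom and V = max_j V_j. Then E(V)^{1/2} ≤ (5d)^{1/2} + (4 log J)^{1/2}, and hence E(V^{1/2}) ≤ (5d)^{1/2} + (4 log J)^{1/2}. -/

import Mathlib

open scoped BigOperators
open MeasureTheory ProbabilityTheory

open scoped NNReal

lemma gauss_exp_sq :
    Integrable (fun x => Real.exp (x ^ 2 / 4)) (gaussianReal 0 1) ∧
      ∫ x, Real.exp (x ^ 2 / 4) ∂(gaussianReal 0 1) = Real.sqrt 2 := by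
  have hpdf : ∀ x : ℝ, gaussianPDFReal 0 1 x
      = (Real.sqrt (2 * Real.pi))⁻¹ * Real.exp (-x ^ 2 / 2) := by
    intro x
    simp [gaussianPDFReal, neg_div]
  have hne : ((1 : NNReal)) ≠ 0 := one_ne_zero
  have hrw : gaussianReal 0 1 =
      MeasureTheory.volume.withDensity
        (fun x => ((gaussianPDFReal 0 1 x).toNNReal : ENNReal)) := by
    rw [gaussianReal_of_var_ne_zero 0 hne]
    rfl
  have hmeasnn : Measurable fun x => (gaussianPDFReal 0 1 x).toNNReal :=
    (measurable_gaussianPDFReal 0 1).real_toNNReal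
  have hcomb : ∀ x : ℝ,
      ((gaussianPDFReal 0 1 x).toNNReal : ℝ) • Real.exp (x ^ 2 / 4)
        = (Real.sqrt (2 * Real.pi))⁻¹ * Real.exp (-(4⁻¹ : ℝ) * x ^ 2) := by
    intro x
    have h0 : ((gaussianPDFReal 0 1 x).toNNReal : ℝ) = gaussianPDFReal 0 1 x :=
      Real.coe_toNNReal _ (gaussianPDFReal_nonneg 0 1 x)
    rw [smul_eq_mul, h0, hpdf x, mul_assoc, ← Real.exp_add]
    ring_nf
  have hfun : (fun x : ℝ => ((gaussianPDFReal 0 1 x).toNNReal : ℝ≥0) • Real.exp (x ^ 2 / 4))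
      = fun x => (Real.sqrt (2 * Real.pi))⁻¹ * Real.exp (-(4⁻¹ : ℝ) * x ^ 2) := by
    funext x
    have := hcomb x
    simpa [NNReal.smul_def] using this
  have hint : Integrable (fun x => Real.exp (x ^ 2 / 4)) (gaussianReal 0 1) := by
    rw [hrw, integrable_withDensity_iff_integrable_smul hmeasnn, hfun]
    exact (integrable_exp_neg_mul_sq (by norm_num : (0:ℝ) < 4⁻¹)).const_mul _
  refine ⟨hint, ?_⟩
  rw [hrw, integral_withDensity_eq_integral_smul hmeasnn, hfun,
    MeasureTheory.integral_const_mul, integral_gaussian]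
  have h4 : Real.pi / (4⁻¹ : ℝ) = 2 * (2 * Real.pi) := by ring
  rw [h4, Real.sqrt_mul (by norm_num : (0:ℝ) ≤ 2)]
  have hs : Real.sqrt (2 * Real.pi) ≠ 0 := by positivity
  field_simp
  rw [Real.sqrt_mul (by positivity : (0:ℝ) ≤ 2 ^ 2) Real.pi, Real.sq_sqrt (by norm_num : (0:ℝ) ≤ 2),
    Real.sqrt_sq (by norm_num : (0:ℝ) ≤ 2)]

lemma indep_prod_integral {Ω ι : Type*} [MeasurableSpace Ω] [DecidableEq ι]
    {μ : Measure Ω} [IsProbabilityMeasure μ] (g : ι → Ω → ℝ)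
    (hindep : iIndepFun g μ)
    (hmeas : ∀ i, Measurable (g i)) (hint : ∀ i, Integrable (g i) μ)
    (s : Finset ι) :
    Integrable (fun ω => ∏ i ∈ s, g i ω) μ ∧
      ∫ ω, ∏ i ∈ s, g i ω ∂μ = ∏ i ∈ s, ∫ ω, g i ω ∂μ := by
  classical
  induction s using Finset.induction_on with
  | empty => simp
  | insert _ _ hi =>
    rename_i i s ih
    have hip : IndepFun (∏ j ∈ s, g j) (g i) μ :=
      hindep.indepFun_finsetProd_of_notMem hmeas hi
    have hprodfn : (∏ j ∈ s, g j) = fun ω => ∏ j ∈ s, g j ω := by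
      funext ω; simp
    have hint_s : Integrable (∏ j ∈ s, g j) μ := by rw [hprodfn]; exact ih.1
    have hmul : Integrable ((∏ j ∈ s, g j) * g i) μ :=
      hip.integrable_mul hint_s (hint i)
    have hval := hip.integral_mul_eq_mul_integral hint_s.aestronglyMeasurable (hint i).aestronglyMeasurable
    constructor
    · have : (fun ω => ∏ j ∈ insert i s, g j ω)
          = (∏ j ∈ s, g j) * g i := by
        funext ω
        simp [Finset.prod_insert hi, mul_comm]
      rw [this]; exact hmul
    · rw [Finset.prod_insert hi]
      have h1 : (fun ω => ∏ j ∈ insert i s, g j ω)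
          = fun ω => (∏ j ∈ s, g j) ω * g i ω := by
        funext ω
        simp [Finset.prod_insert hi, mul_comm]
      calc ∫ ω, ∏ j ∈ insert i s, g j ω ∂μ
          = ∫ ω, ((∏ j ∈ s, g j) * g i) ω ∂μ := by rw [h1]; rfl
        _ = (∫ ω, (∏ j ∈ s, g j) ω ∂μ) * ∫ ω, g i ω ∂μ := hval
        _ = (∫ ω, g i ω ∂μ) * ∏ j ∈ s, ∫ ω, g j ω ∂μ := by
            rw [hprodfn, ih.2]; ring

/-- Expected maximum of i.i.d. chi-squared variables: if V_1,…,V_J (J ≥ 2) are i.i.d.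
chi-squared with d ≥ 1 degrees of freedom (realized as sums of squares of i.i.d.
standard Gaussians) and V = max_j V_j, then E(V)^{1/2} ≤ √(5d) + √(4 log J) and hence
E(V^{1/2}) ≤ √(5d) + √(4 log J). -/
theorem expected_max_chi_squared {Ω : Type*} [MeasurableSpace Ω]
    (μ : Measure Ω) [IsProbabilityMeasure μ]
    {J d : ℕ} (hJ : 2 ≤ J) (hd : 1 ≤ d)
    (Z : Fin J × Fin d → Ω → ℝ)
    (hmeas : ∀ q, Measurable (Z q))
    (hindep : iIndepFun Z μ)
    (hlaw : ∀ q, Measure.map (Z q) μ = gaussianReal 0 1)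
    (V : Fin J → Ω → ℝ) (hV : ∀ j ω, V j ω = ∑ k, (Z (j, k) ω) ^ 2) :
    Real.sqrt (∫ ω, (Finset.univ.sup'
        (⟨⟨0, by omega⟩, Finset.mem_univ _⟩ : (Finset.univ : Finset (Fin J)).Nonempty)
        fun j => V j ω) ∂μ)
      ≤ Real.sqrt (5 * d) + Real.sqrt (4 * Real.log J) ∧
    (∫ ω, Real.sqrt (Finset.univ.sup'
        (⟨⟨0, by omega⟩, Finset.mem_univ _⟩ : (Finset.univ : Finset (Fin J)).Nonempty)
        fun j => V j ω) ∂μ)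
      ≤ Real.sqrt (5 * d) + Real.sqrt (4 * Real.log J) := by
  classical
  have hne : (Finset.univ : Finset (Fin J)).Nonempty :=
    ⟨⟨0, by omega⟩, Finset.mem_univ _⟩
  set φ : ℝ → ℝ := fun x => Real.exp (x ^ 2 / 4) with hφdef
  have hφm : Measurable φ :=
    Real.measurable_exp.comp ((measurable_id.pow_const 2).div_const 4)
  -- per-coordinate integrability and value
  have hZint : ∀ q, Integrable (fun ω => Real.exp ((Z q ω) ^ 2 / 4)) μ := by
    intro q
    have h := gauss_exp_sq.1
    rw [← hlaw q] at h
    exact (integrable_map_measure hφm.aestronglyMeasurable (hmeas q).aemeasurable).mp h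
  have hZval : ∀ q, ∫ ω, Real.exp ((Z q ω) ^ 2 / 4) ∂μ = Real.sqrt 2 := by
    intro q
    have h : ∫ x, Real.exp (x ^ 2 / 4) ∂(Measure.map (Z q) μ) = Real.sqrt 2 := by
      rw [hlaw q]; exact gauss_exp_sq.2
    rwa [integral_map (hmeas q).aemeasurable hφm.aestronglyMeasurable] at h
  -- independence of the exponentials
  have hgind : iIndepFun
      (fun q ω => Real.exp ((Z q ω) ^ 2 / 4)) μ :=
    hindep.comp (fun _ => φ) (fun _ => hφm)
  -- measurability of V
  have hVfun : ∀ j, V j = fun ω => ∑ k, (Z (j, k) ω) ^ 2 := fun j => funext (hV j)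
  have hVmeas : ∀ j, Measurable (V j) := by
    intro j
    rw [hVfun j]
    exact Finset.measurable_sum _ (fun k _ => (hmeas (j, k)).pow_const 2)
  have hV0 : ∀ j ω, 0 ≤ V j ω := by
    intro j ω
    rw [hV j ω]
    exact Finset.sum_nonneg fun k _ => sq_nonneg _
  -- row MGF
  have hrow : ∀ j : Fin J, Integrable (fun ω => Real.exp (V j ω / 4)) μ ∧
      ∫ ω, Real.exp (V j ω / 4) ∂μ = Real.sqrt 2 ^ d := by
    intro j
    have hemb : Function.Injective (fun k : Fin d => ((j, k) : Fin J × Fin d)) := by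
      intro a b h; simpa using congrArg Prod.snd h
    set s : Finset (Fin J × Fin d) := Finset.univ.map ⟨fun k => (j, k), hemb⟩ with hs
    have hps := indep_prod_integral (fun q ω => Real.exp ((Z q ω) ^ 2 / 4)) hgind
      (fun q => hφm.comp (hmeas q)) hZint s
    have hprodeq : (fun ω => ∏ q ∈ s, Real.exp ((Z q ω) ^ 2 / 4))
        = fun ω => Real.exp (V j ω / 4) := by
      funext ω
      rw [hs, Finset.prod_map]
      simp only [Function.Embedding.coeFn_mk]
      rw [hV j ω, Finset.sum_div, Real.exp_sum]
    have hcard : ∏ q ∈ s, ∫ ω, Real.exp ((Z q ω) ^ 2 / 4) ∂μ = Real.sqrt 2 ^ d := by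
      rw [Finset.prod_congr rfl fun q _ => hZval q, Finset.prod_const]
      rw [hs, Finset.card_map, Finset.card_univ, Fintype.card_fin]
    constructor
    · rw [← hprodeq]; exact hps.1
    · rw [← hprodeq, hps.2, hcard]
  -- the max W
  set W : Ω → ℝ := fun ω => Finset.univ.sup' hne fun j => V j ω with hWdef
  have hWmeas : Measurable W := by
    have : W = Finset.univ.sup' hne V := by
      funext ω
      rw [hWdef]
      exact (Finset.sup'_apply hne V ω).symm
    rw [this]
    exact Finset.measurable_sup' hne fun j _ => hVmeas j
  have hW0 : ∀ ω, 0 ≤ W ω := by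
    intro ω
    have h := Finset.le_sup' (fun j => V j ω) (Finset.mem_univ (⟨0, by omega⟩ : Fin J))
    exact le_trans (hV0 _ ω) h
  -- the dominating sum S
  set S : Ω → ℝ := fun ω => ∑ j, Real.exp (V j ω / 4) with hSdef
  have hSint : Integrable S μ :=
    integrable_finset_sum _ fun j _ => (hrow j).1
  have hWexp_le : ∀ ω, Real.exp (W ω / 4) ≤ S ω := by
    intro ω
    obtain ⟨j, _, hje⟩ := Finset.exists_mem_eq_sup' hne fun j => V j ω
    rw [hWdef]
    simp only
    rw [hje]
    show Real.exp (V j ω / 4) ≤ ∑ i, Real.exp (V i ω / 4)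
    exact Finset.single_le_sum (fun i _ => (Real.exp_pos (V i ω / 4)).le) (Finset.mem_univ j)
  have hexpWmeas : Measurable fun ω => Real.exp (W ω / 4) :=
    Real.measurable_exp.comp (hWmeas.div_const 4)
  have hexpWint : Integrable (fun ω => Real.exp (W ω / 4)) μ := by
    refine Integrable.mono' hSint hexpWmeas.aestronglyMeasurable (ae_of_all _ fun ω => ?_)
    rw [Real.norm_eq_abs, abs_of_pos (Real.exp_pos _)]
    exact hWexp_le ω
  set E : ℝ := ∫ ω, Real.exp (W ω / 4) ∂μ with hEdef
  have hE1 : 1 ≤ E := by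
    have h1 : (1 : ℝ) = ∫ _ω, (1 : ℝ) ∂μ := by simp
    rw [hEdef, h1]
    refine integral_mono (integrable_const 1) hexpWint fun ω => ?_
    rw [show (1:ℝ) = Real.exp 0 by simp]
    exact Real.exp_le_exp.mpr (div_nonneg (hW0 ω) (by norm_num))
  have hEpos : 0 < E := lt_of_lt_of_le one_pos hE1
  have hEub : E ≤ (J : ℝ) * Real.sqrt 2 ^ d := by
    have h2 : E ≤ ∫ ω, S ω ∂μ :=
      integral_mono hexpWint hSint fun ω => hWexp_le ω
    have h3 : ∫ ω, S ω ∂μ = (J : ℝ) * Real.sqrt 2 ^ d := by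
      rw [hSdef]
      rw [integral_finset_sum _ fun j _ => (hrow j).1]
      rw [Finset.sum_congr rfl fun j _ => (hrow j).2, Finset.sum_const,
        Finset.card_univ, Fintype.card_fin, nsmul_eq_mul]
    rw [← h3]; exact h2
  -- integrability of W
  have hWint : Integrable W μ := by
    refine Integrable.mono' (hSint.const_mul 4) hWmeas.aestronglyMeasurable
      (ae_of_all _ fun ω => ?_)
    rw [Real.norm_eq_abs, abs_of_nonneg (hW0 ω)]
    have h1 := Real.add_one_le_exp (W ω / 4)
    have h2 := hWexp_le ω
    linarith
  set A : ℝ := ∫ ω, W ω ∂μ with hAdef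
  have hA0 : 0 ≤ A := integral_nonneg fun ω => hW0 ω
  -- key bound A ≤ 4 log E
  have hAle : A ≤ 4 * Real.log E := by
    set c : ℝ := Real.log E with hcdef
    have hec : Real.exp c = E := Real.exp_log hEpos
    have hpt : ∀ ω, W ω ≤ (4 / E) * Real.exp (W ω / 4) + (4 * c - 4) := by
      intro ω
      have h1 := Real.add_one_le_exp (W ω / 4 - c)
      have h2 : Real.exp (W ω / 4 - c) = Real.exp (W ω / 4) / E := by
        rw [Real.exp_sub, hec]
      rw [h2] at h1
      have h3 : Real.exp (W ω / 4) / E = Real.exp (W ω / 4) * E⁻¹ := by ring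
      have hEne : E ≠ 0 := ne_of_gt hEpos
      have h4 : W ω / 4 - c + 1 ≤ Real.exp (W ω / 4) / E := h1
      have h5 : (4 / E) * Real.exp (W ω / 4) = 4 * (Real.exp (W ω / 4) / E) := by ring
      rw [h5]
      linarith
    have hint2 : Integrable (fun ω => (4 / E) * Real.exp (W ω / 4) + (4 * c - 4)) μ :=
      (hexpWint.const_mul _).add (integrable_const _)
    have h6 : A ≤ ∫ ω, ((4 / E) * Real.exp (W ω / 4) + (4 * c - 4)) ∂μ :=
      integral_mono hWint hint2 fun ω => hpt ω
    have h7 : ∫ ω, ((4 / E) * Real.exp (W ω / 4) + (4 * c - 4)) ∂μ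
        = (4 / E) * E + (4 * c - 4) := by
      rw [integral_add (hexpWint.const_mul _) (integrable_const _),
        MeasureTheory.integral_const_mul, integral_const]
      simp [← hEdef]
    have hEne : E ≠ 0 := ne_of_gt hEpos
    have h8 : (4 / E) * E = 4 := by field_simp
    rw [h7, h8] at h6
    linarith
  -- numeric bound
  have hlogJ : 0 ≤ Real.log J :=
    Real.log_nonneg (by exact_mod_cast Nat.one_le_of_lt hJ)
  have hAub : A ≤ 5 * d + 4 * Real.log J := by
    have hlE : Real.log E ≤ Real.log ((J : ℝ) * Real.sqrt 2 ^ d) :=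
      Real.log_le_log hEpos hEub
    have hJpos : (0 : ℝ) < J := by positivity
    have hsq : (0 : ℝ) < Real.sqrt 2 := by positivity
    have hlm : Real.log ((J : ℝ) * Real.sqrt 2 ^ d)
        = Real.log J + d * (Real.log 2 / 2) := by
      rw [Real.log_mul (ne_of_gt hJpos) (by positivity), Real.log_pow,
        Real.log_sqrt (by norm_num : (0:ℝ) ≤ 2)]
    have hlog2 : Real.log 2 < 0.6931471808 := Real.log_two_lt_d9
    have hd1 : (1 : ℝ) ≤ d := by exact_mod_cast hd
    have hlog2' : 0 < Real.log 2 := Real.log_pos (by norm_num)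
    nlinarith [hAle]
  -- conclusions
  have h5d : (0 : ℝ) ≤ 5 * d := by positivity
  have h4l : (0 : ℝ) ≤ 4 * Real.log J := by linarith
  have hsqrtsum : Real.sqrt (5 * d + 4 * Real.log J)
      ≤ Real.sqrt (5 * d) + Real.sqrt (4 * Real.log J) := by
    have hs1 := Real.sq_sqrt h5d
    have hs2 := Real.sq_sqrt h4l
    have hs3 := Real.sqrt_nonneg (5 * (d:ℝ))
    have hs4 := Real.sqrt_nonneg (4 * Real.log J)
    have : 5 * (d:ℝ) + 4 * Real.log J
        ≤ (Real.sqrt (5 * d) + Real.sqrt (4 * Real.log J)) ^ 2 := by nlinarith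
    calc Real.sqrt (5 * d + 4 * Real.log J)
        ≤ Real.sqrt ((Real.sqrt (5 * d) + Real.sqrt (4 * Real.log J)) ^ 2) :=
          Real.sqrt_le_sqrt this
      _ = Real.sqrt (5 * d) + Real.sqrt (4 * Real.log J) := Real.sqrt_sq (by positivity)
  have part1 : Real.sqrt A ≤ Real.sqrt (5 * d) + Real.sqrt (4 * Real.log J) :=
    le_trans (Real.sqrt_le_sqrt hAub) hsqrtsum
  refine ⟨part1, ?_⟩
  -- part 2
  show (∫ ω, Real.sqrt (W ω) ∂μ) ≤ _
  rcases eq_or_lt_of_le hA0 with hAz | hApos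
  · have hWz : W =ᵐ[μ] 0 :=
      (integral_eq_zero_iff_of_nonneg (fun ω => hW0 ω) hWint).mp hAz.symm
    have hsz : (fun ω => Real.sqrt (W ω)) =ᵐ[μ] (fun _ => (0 : ℝ)) :=
      hWz.mono fun ω hω => by rw [Pi.zero_apply] at hω; simp [hω]
    have : (∫ ω, Real.sqrt (W ω) ∂μ) = 0 := by
      rw [integral_congr_ae hsz]
      simp
    rw [this]
    positivity
  · have hsA : 0 < Real.sqrt A := Real.sqrt_pos.mpr hApos
    have hpt : ∀ ω, Real.sqrt (W ω) ≤ (W ω + A) / (2 * Real.sqrt A) := by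
      intro ω
      rw [le_div_iff₀ (by positivity)]
      nlinarith [sq_nonneg (Real.sqrt (W ω) - Real.sqrt A), Real.sq_sqrt (hW0 ω),
        Real.sq_sqrt hA0]
    have hbint : Integrable (fun ω => (W ω + A) / (2 * Real.sqrt A)) μ :=
      (hWint.add (integrable_const A)).div_const _
    have hsqint : Integrable (fun ω => Real.sqrt (W ω)) μ := by
      refine Integrable.mono' hbint
        (Real.continuous_sqrt.measurable.comp hWmeas).aestronglyMeasurable
        (ae_of_all _ fun ω => ?_)
      rw [Real.norm_eq_abs, abs_of_nonneg (Real.sqrt_nonneg _)]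
      exact hpt ω
    have h1 : (∫ ω, Real.sqrt (W ω) ∂μ) ≤ ∫ ω, (W ω + A) / (2 * Real.sqrt A) ∂μ :=
      integral_mono hsqint hbint fun ω => hpt ω
    have h2 : ∫ ω, (W ω + A) / (2 * Real.sqrt A) ∂μ = Real.sqrt A := by
      rw [integral_div, integral_add hWint (integrable_const A), integral_const]
      simp only [probReal_univ, one_smul]
      rw [← hAdef, show A + A = 2 * A by ring,
        mul_div_mul_left _ _ (two_ne_zero (α := ℝ)), Real.div_sqrt]
    rw [h2] at h1
    exact le_trans h1 part1
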